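/- arXiv:2203.02978 — 3 statements merged into one kernel-verified Lean document; each statement's English description precedes it below -/
import Mathlib

section
/- Let A be a Metzler matrix in ℝ^{n×n} (all off-diagonal entries nonnegative). Then the following three statements are equivalent: (i) A is Hurwitz, i.e. every complex eigenvalue of A has negative real part; (ii) there exists a vector p ∈ ℝⁿ with all components strictly positive such that Ap has all components strictly negative; (iii) A is invertible and −A⁻¹ has all entries nonnegative. -/
open Matrix Filter Finset Topology

attribute [local instance] Matrix.linftyOpNormedRing Matrix.linftyOpNormedAlgebra

namespace MetzlerAux

variable {n : ℕ}

lemma mem_spectrum_iff_det (B : Matrix (Fin n) (Fin n) ℂ) (μ : ℂ) :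
    μ ∈ spectrum ℂ B ↔ (μ • (1 : Matrix (Fin n) (Fin n) ℂ) - B).det = 0 := by
  rw [spectrum.mem_iff, Matrix.isUnit_iff_isUnit_det, isUnit_iff_ne_zero, not_not,
    Algebra.algebraMap_eq_smul_one]

lemma entry_norm_le (B : Matrix (Fin n) (Fin n) ℂ) (i j : Fin n) : ‖B i j‖ ≤ ‖B‖ := by
  have h1 : ‖B i j‖₊ ≤ ∑ j' : Fin n, ‖B i j'‖₊ :=
    Finset.single_le_sum (f := fun j' => ‖B i j'‖₊) (fun _ _ => zero_le) (Finset.mem_univ j)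
  have h2 : (∑ j' : Fin n, ‖B i j'‖₊) ≤ ‖B‖₊ := by
    rw [Matrix.linfty_opNNNorm_def]
    exact Finset.le_sup (f := fun i => ∑ j' : Fin n, ‖B i j'‖₊) (Finset.mem_univ i)
  exact_mod_cast h1.trans h2

/-- (ii) → (i) : Gershgorin-type argument. -/
lemma two_implies_one (A : Matrix (Fin n) (Fin n) ℝ)
    (hMetzler : ∀ i j, i ≠ j → 0 ≤ A i j)
    (p : Fin n → ℝ) (hp : ∀ i, 0 < p i) (hAp : ∀ i, A.mulVec p i < 0) :
    ∀ μ : ℂ, μ ∈ spectrum ℂ (A.map (algebraMap ℝ ℂ)) → μ.re < 0 := by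
  intro μ hμ
  set M := A.map (algebraMap ℝ ℂ) with hM
  rw [mem_spectrum_iff_det] at hμ
  obtain ⟨v, hv, hveq⟩ := (Matrix.exists_mulVec_eq_zero_iff).2 hμ
  have hMv : ∀ i, μ * v i = ∑ j, (A i j : ℂ) * v j := by
    intro i
    have := congrFun hveq i
    simp only [Matrix.sub_mulVec, Matrix.smul_mulVec, Matrix.one_mulVec, Pi.sub_apply,
      Pi.smul_apply, smul_eq_mul, Pi.zero_apply, sub_eq_zero] at this
    rw [this, Matrix.mulVec, dotProduct]
    simp [hM, Matrix.map_apply, Complex.coe_algebraMap]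
  obtain ⟨j₀, hj₀⟩ := Function.ne_iff.mp hv
  obtain ⟨i, -, hi⟩ := Finset.exists_max_image Finset.univ (fun j => ‖v j‖ / p j)
    ⟨j₀, Finset.mem_univ _⟩
  have hvi : 0 < ‖v i‖ := by
    have h1 : 0 < ‖v j₀‖ / p j₀ := div_pos (norm_pos_iff.2 hj₀) (hp j₀)
    have h3 : 0 < ‖v i‖ / p i := lt_of_lt_of_le h1 (hi j₀ (Finset.mem_univ _))
    have h4 := mul_pos h3 (hp i)
    rwa [div_mul_cancel₀ _ (hp i).ne'] at h4
  have hbound : ∀ j, ‖v j‖ ≤ ‖v i‖ / p i * p j := by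
    intro j
    have h := hi j (Finset.mem_univ _)
    calc ‖v j‖ = ‖v j‖ / p j * p j := (div_mul_cancel₀ _ (hp j).ne').symm
    _ ≤ ‖v i‖ / p i * p j := mul_le_mul_of_nonneg_right h (le_of_lt (hp j))
  have h1 : (μ - (A i i : ℂ)) * v i = ∑ j ∈ Finset.univ.erase i, (A i j : ℂ) * v j := by
    have := hMv i
    rw [← Finset.add_sum_erase _ _ (Finset.mem_univ i)] at this
    rw [sub_mul]
    linear_combination this
  have h2 : ‖μ - (A i i : ℂ)‖ * ‖v i‖ ≤ ∑ j ∈ Finset.univ.erase i, A i j * ‖v j‖ := by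
    rw [← norm_mul, h1]
    refine (norm_sum_le _ _).trans (le_of_eq (Finset.sum_congr rfl fun j hj => ?_))
    rw [norm_mul, Complex.norm_real, Real.norm_eq_abs,
      abs_of_nonneg (hMetzler i j (Finset.ne_of_mem_erase hj).symm)]
  have h3 : ∑ j ∈ Finset.univ.erase i, A i j * ‖v j‖
      ≤ ‖v i‖ / p i * ∑ j ∈ Finset.univ.erase i, A i j * p j := by
    rw [Finset.mul_sum]
    refine Finset.sum_le_sum fun j hj => ?_
    have hA0 : 0 ≤ A i j := hMetzler i j (Finset.ne_of_mem_erase hj).symm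
    calc A i j * ‖v j‖ ≤ A i j * (‖v i‖ / p i * p j) :=
      mul_le_mul_of_nonneg_left (hbound j) hA0
    _ = ‖v i‖ / p i * (A i j * p j) := by ring
  have hS : A.mulVec p i = A i i * p i + ∑ j ∈ Finset.univ.erase i, A i j * p j := by
    rw [Matrix.mulVec, dotProduct, ← Finset.add_sum_erase _ _ (Finset.mem_univ i)]
  have h4 : ‖μ - (A i i : ℂ)‖ ≤ (∑ j ∈ Finset.univ.erase i, A i j * p j) / p i := by
    rw [← mul_le_mul_iff_of_pos_right hvi]
    exact (h2.trans h3).trans (le_of_eq (by ring))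
  have h5 : μ.re - A i i ≤ ‖μ - (A i i : ℂ)‖ := by
    have : (μ - (A i i : ℂ)).re = μ.re - A i i := by simp
    rw [← this]
    exact Complex.re_le_norm _
  have h6 := hAp i
  rw [hS] at h6
  have hpi := hp i
  have h7 : (∑ j ∈ Finset.univ.erase i, A i j * p j) / p i < -(A i i) := by
    rw [div_lt_iff₀ hpi]
    nlinarith
  linarith
/-- (iii) → (ii). -/
lemma three_implies_two (A : Matrix (Fin n) (Fin n) ℝ)
    (hU : IsUnit A) (hpos : ∀ i j, 0 ≤ (-A⁻¹) i j) :
    ∃ p : Fin n → ℝ, (∀ i, 0 < p i) ∧ ∀ i, A.mulVec p i < 0 := by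
  have hdet : IsUnit A.det := (Matrix.isUnit_iff_isUnit_det A).1 hU
  refine ⟨fun i => ∑ j, (-A⁻¹) i j, fun i => ?_, fun i => ?_⟩
  · rcases (Finset.sum_nonneg fun j _ => hpos i j).lt_or_eq with h | h
    · exact h
    · exfalso
      have hz : ∀ j, (-A⁻¹) i j = 0 := by
        intro j
        have := (Finset.sum_eq_zero_iff_of_nonneg fun j _ => hpos i j).1 h.symm
        exact this j (Finset.mem_univ _)
      have hinv : A⁻¹ * A = 1 := Matrix.nonsing_inv_mul A hdet
      have : (A⁻¹ * A) i i = 0 := by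
        rw [Matrix.mul_apply]
        refine Finset.sum_eq_zero fun k _ => ?_
        have : A⁻¹ i k = 0 := by have := hz k; simpa using this
        rw [this, zero_mul]
      rw [hinv, Matrix.one_apply_eq] at this
      exact one_ne_zero this
  · have : A.mulVec (fun i => ∑ j, (-A⁻¹) i j) = fun _ => (-1 : ℝ) := by
      have h1 : (fun i => ∑ j, (-A⁻¹) i j) = (-A⁻¹).mulVec (fun _ => (1 : ℝ)) := by
        funext i; simp [Matrix.mulVec, dotProduct]
      rw [h1, Matrix.mulVec_mulVec]
      have : A * -A⁻¹ = -1 := by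
        rw [Matrix.mul_neg, Matrix.mul_nonsing_inv A hdet]
      rw [this]
      funext i
      simp [Matrix.neg_mulVec, Matrix.one_mulVec]
    rw [this]
    norm_num

/-- (i) → (iii). -/
lemma one_implies_three (A : Matrix (Fin n) (Fin n) ℝ)
    (hMetzler : ∀ i j, i ≠ j → 0 ≤ A i j)
    (hHur : ∀ μ : ℂ, μ ∈ spectrum ℂ (A.map (algebraMap ℝ ℂ)) → μ.re < 0) :
    IsUnit A ∧ ∀ i j, 0 ≤ (-A⁻¹) i j := by
  set M := A.map (algebraMap ℝ ℂ) with hMdef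
  have hU : IsUnit A := by
    rw [Matrix.isUnit_iff_isUnit_det, isUnit_iff_ne_zero]
    intro hdet
    have hMdet : M.det = 0 := by
      have h := (algebraMap ℝ ℂ).map_det A
      rw [hMdef, ← RingHom.mapMatrix_apply]
      rw [← h, hdet, map_zero]
    have h0 : (0 : ℂ) ∈ spectrum ℂ M := by
      rw [mem_spectrum_iff_det]
      simp [Matrix.det_neg, hMdet]
    simpa using hHur 0 h0
  refine ⟨hU, ?_⟩
  rcases Nat.eq_zero_or_pos n with hn | hn
  · intro i j
    exact absurd i.isLt (by omega)
  haveI : NeZero n := ⟨hn.ne'⟩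
  have hAdet : A.det ≠ 0 := isUnit_iff_ne_zero.1 ((Matrix.isUnit_iff_isUnit_det A).1 hU)
  obtain ⟨z₀, hz₀mem, hz₀max⟩ := (spectrum.isCompact (a := M)).exists_isMaxOn
    (spectrum.nonempty M) (Complex.continuous_re.continuousOn)
  set δ := -z₀.re with hδdef
  have hδ : 0 < δ := by
    have := hHur z₀ hz₀mem
    simp only [hδdef]
    linarith
  have hre : ∀ z ∈ spectrum ℂ M, z.re ≤ -δ := by
    intro z hz
    have := hz₀max hz
    simp only [hδdef, neg_neg]
    exact this
  set R := ‖M‖ with hRdef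
  have hR : ∀ z ∈ spectrum ℂ M, ‖z‖ ≤ R := fun z hz => spectrum.norm_le_norm_of_mem hz
  set C := Finset.univ.sup' Finset.univ_nonempty (fun i : Fin n => -A i i) with hCdef
  set s := max (max 1 ((R^2+1)/(2*δ))) C with hsdef
  have hs1 : (1:ℝ) ≤ s := le_trans (le_max_left _ _) (le_max_left _ _)
  have hs0 : (0:ℝ) < s := lt_of_lt_of_le one_pos hs1
  have hsC : ∀ i, -A i i ≤ s := by
    intro i
    have h : -A i i ≤ C := Finset.le_sup' (f := fun i : Fin n => -A i i) (Finset.mem_univ i)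
    exact le_trans h (le_max_right _ _)
  have hsR : R^2 < 2*δ*s := by
    have h1 : (R^2+1)/(2*δ) ≤ s := le_trans (le_max_right _ _) (le_max_left _ _)
    have h2 : R^2 + 1 ≤ s * (2*δ) := by rwa [div_le_iff₀ (by positivity)] at h1
    nlinarith
  set x : Matrix (Fin n) (Fin n) ℝ := s⁻¹ • (A + s • 1) with hxdef
  have hx : ∀ i j, 0 ≤ x i j := by
    intro i j
    rcases eq_or_ne i j with rfl | hij
    · have h := hsC i
      simp only [hxdef, Matrix.smul_apply, Matrix.add_apply, Matrix.one_apply_eq,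
        smul_eq_mul, mul_one]
      apply mul_nonneg (inv_nonneg.2 hs0.le)
      linarith
    · have h := hMetzler i j hij
      simp only [hxdef, Matrix.smul_apply, Matrix.add_apply, Matrix.one_apply_ne hij,
        smul_eq_mul, mul_zero, add_zero]
      exact mul_nonneg (inv_nonneg.2 hs0.le) h
  set y : Matrix (Fin n) (Fin n) ℂ := ((s:ℂ))⁻¹ • (M + (s:ℂ) • 1) with hydef
  have hsC0 : (s:ℂ) ≠ 0 := by exact_mod_cast hs0.ne'
  have hxy : x.map (algebraMap ℝ ℂ) = y := by
    ext i j
    rcases eq_or_ne i j with rfl | hij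
    · simp only [hxdef, hydef, Matrix.map_apply, Matrix.smul_apply, Matrix.add_apply,
        Matrix.one_apply_eq, smul_eq_mul, mul_one, hMdef, Complex.coe_algebraMap]
      push_cast
      ring
    · simp only [hxdef, hydef, Matrix.map_apply, Matrix.smul_apply, Matrix.add_apply,
        Matrix.one_apply_ne hij, smul_eq_mul, mul_zero, add_zero, hMdef, Complex.coe_algebraMap]
      push_cast
      ring
  have hspec_y : ∀ z ∈ spectrum ℂ y, ‖z‖₊ < 1 := by
    intro z hz
    rw [mem_spectrum_iff_det] at hz
    have key : z • (1 : Matrix (Fin n) (Fin n) ℂ) - y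
        = (s:ℂ)⁻¹ • (((s:ℂ)*z - s) • (1 : Matrix (Fin n) (Fin n) ℂ) - M) := by
      ext i j
      rcases eq_or_ne i j with rfl | hij
      · simp only [Matrix.sub_apply, Matrix.smul_apply, Matrix.add_apply, Matrix.one_apply_eq,
          smul_eq_mul, mul_one, hydef]
        field_simp
        ring
      · simp only [Matrix.sub_apply, Matrix.smul_apply, Matrix.add_apply,
          Matrix.one_apply_ne hij, smul_eq_mul, mul_zero, add_zero, zero_sub, mul_neg, hydef]
    have hdet0 : ((((s:ℂ))*z - s) • (1 : Matrix (Fin n) (Fin n) ℂ) - M).det = 0 := by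
      rw [key, Matrix.det_smul] at hz
      rcases mul_eq_zero.1 hz with h | h
      · exact absurd h (pow_ne_zero _ (inv_ne_zero hsC0))
      · exact h
    have hwmem : ((s:ℂ)*z - s) ∈ spectrum ℂ M := (mem_spectrum_iff_det M _).2 hdet0
    set w : ℂ := (s:ℂ)*z - s with hwdef
    have h1 : w.re ≤ -δ := hre w hwmem
    have h2 : ‖w‖ ≤ R := hR w hwmem
    have h2' : w.re^2 + w.im^2 ≤ R^2 := by
      have h3 : ‖w‖^2 ≤ R^2 := by nlinarith [norm_nonneg w]
      have hn2 : ‖w‖^2 = w.re^2 + w.im^2 := by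
        rw [Complex.sq_norm, Complex.normSq_apply]
        ring
      linarith
    have hws : ‖w + s‖ < s := by
      have he : ‖w + (s:ℂ)‖^2 = (w.re + s)^2 + w.im^2 := by
        rw [Complex.sq_norm, Complex.normSq_apply]
        simp [Complex.add_re, Complex.add_im]
        ring
      nlinarith [norm_nonneg (w + (s:ℂ))]
    have hzlt : ‖z‖ < 1 := by
      have hzs : (s:ℂ) * z = w + s := by rw [hwdef]; ring
      have hnm : ‖(s:ℂ) * z‖ = s * ‖z‖ := by
        rw [norm_mul, Complex.norm_real, Real.norm_eq_abs, abs_of_pos hs0]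
      rw [hzs] at hnm
      nlinarith [norm_nonneg z]
    exact_mod_cast hzlt
  have hρ : spectralRadius ℂ y < 1 := by
    simpa using spectrum.spectralRadius_lt_of_forall_lt (a := y) (r := 1) hspec_y
  have htend := spectrum.pow_nnnorm_pow_one_div_tendsto_nhds_spectralRadius y
  have hev : ∀ᶠ k : ℕ in atTop, (‖y^k‖₊ : ENNReal) ^ (1/(k:ℝ)) < 1 :=
    htend.eventually_lt_const hρ
  obtain ⟨k, hk1, hklt⟩ := ((eventually_ge_atTop 1).and hev).exists
  have hk0 : (0:ℝ) < (k:ℝ) := by exact_mod_cast hk1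
  have hyk : ‖y^k‖ < 1 := by
    by_contra h
    push_neg at h
    have h1 : (1 : ENNReal) ≤ (‖y^k‖₊ : ENNReal) := by
      rw [← ENNReal.coe_one, ENNReal.coe_le_coe]
      rw [← NNReal.coe_le_coe]
      simpa using h
    have := ENNReal.one_le_rpow h1 (by positivity : (0:ℝ) < 1/(k:ℝ))
    exact absurd hklt (not_lt.2 this)
  have hb : Tendsto (fun q : ℕ => (y^k)^q) atTop (𝓝 0) :=
    tendsto_pow_atTop_nhds_zero_of_norm_lt_one hyk
  have hmap_pow : ∀ m : ℕ, (x^m).map (algebraMap ℝ ℂ) = y^m := by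
    intro m
    rw [← hxy]
    have h := map_pow ((algebraMap ℝ ℂ).mapMatrix) x m
    simpa [RingHom.mapMatrix_apply] using h
  have hto0 : ∀ i l : Fin n, Tendsto (fun q : ℕ => (x^(k*q)) i l) atTop (𝓝 0) := by
    intro i l
    refine squeeze_zero_norm (a := fun q => ‖(y^k)^q‖) (fun q => ?_) (by simpa using hb.norm)
    have he : ((y^k)^q) i l = algebraMap ℝ ℂ ((x^(k*q)) i l) := by
      rw [← pow_mul, ← hmap_pow (k*q)]
      simp [Matrix.map_apply]
    have hnorm : ‖(x^(k*q)) i l‖ = ‖((y^k)^q) i l‖ := by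
      rw [he, Complex.coe_algebraMap, Complex.norm_real]
    rw [hnorm]
    exact entry_norm_le _ i l
  set U : Matrix (Fin n) (Fin n) ℝ := 1 - x with hUdef
  have hAU : A = (-s) • U := by
    ext i j
    rcases eq_or_ne i j with rfl | hij
    · simp only [hUdef, hxdef, Matrix.smul_apply, Matrix.sub_apply, Matrix.add_apply,
        Matrix.one_apply_eq, smul_eq_mul, mul_one]
      field_simp
      ring
    · simp only [hUdef, hxdef, Matrix.smul_apply, Matrix.sub_apply, Matrix.add_apply,
        Matrix.one_apply_ne hij, smul_eq_mul, mul_zero, add_zero, zero_sub, mul_neg, neg_mul,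
        neg_neg]
      field_simp
  have hUdet : IsUnit U.det := by
    rw [isUnit_iff_ne_zero]
    intro h
    apply hAdet
    rw [hAU, Matrix.det_smul, h, mul_zero]
  have hUinv : U * U⁻¹ = 1 := Matrix.mul_nonsing_inv U hUdet
  have hAinv : -A⁻¹ = s⁻¹ • U⁻¹ := by
    have hone : A * (-(s⁻¹) • U⁻¹) = 1 := by
      rw [hAU, smul_mul_assoc, mul_smul_comm, hUinv, smul_smul]
      have he : (-s) * (-(s⁻¹)) = 1 := by field_simp
      rw [he, one_smul]
    rw [Matrix.inv_eq_right_inv hone]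
    simp
  have hpow : ∀ (m : ℕ) (i j : Fin n), 0 ≤ (x^m) i j := by
    intro m
    induction m with
    | zero =>
      intro i j
      rcases eq_or_ne i j with rfl | hij
      · simp [Matrix.one_apply_eq]
      · simp [Matrix.one_apply_ne hij]
    | succ m ih =>
      intro i j
      rw [pow_succ, Matrix.mul_apply]
      exact Finset.sum_nonneg fun l _ => mul_nonneg (ih i l) (hx l j)
  have hdecomp : ∀ q : ℕ, U⁻¹ = (∑ m ∈ Finset.range (k*q), x^m) + x^(k*q) * U⁻¹ := by
    intro q
    have hg : (∑ m ∈ Finset.range (k*q), x^m) * U = 1 - x^(k*q) := by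
      have h := geom_sum_mul x (k*q)
      have h2 : (∑ m ∈ Finset.range (k*q), x^m) * U
          = -((∑ m ∈ Finset.range (k*q), x^m) * (x - 1)) := by
        rw [hUdef, ← neg_sub x 1, mul_neg]
      rw [h2, h, neg_sub]
    have hsum : (∑ m ∈ Finset.range (k*q), x^m) = (1 - x^(k*q)) * U⁻¹ := by
      rw [← hg, mul_assoc, hUinv, mul_one]
    rw [hsum, sub_mul, one_mul]
    abel
  intro i j
  rw [hAinv, Matrix.smul_apply, smul_eq_mul]
  have hUij : 0 ≤ U⁻¹ i j := by
    have htail : Tendsto (fun q : ℕ => (x^(k*q) * U⁻¹) i j) atTop (𝓝 0) := by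
      simp only [Matrix.mul_apply]
      have h := tendsto_finset_sum (Finset.univ : Finset (Fin n))
        (fun l (_ : l ∈ Finset.univ) => (hto0 i l).mul_const (U⁻¹ l j))
      simpa using h
    have hnn : ∀ q : ℕ, 0 ≤ U⁻¹ i j - (x^(k*q) * U⁻¹) i j := by
      intro q
      have h := congrFun (congrFun (hdecomp q) i) j
      rw [Matrix.add_apply] at h
      have hs' : 0 ≤ (∑ m ∈ Finset.range (k*q), x ^ m) i j := by
        rw [Matrix.sum_apply]
        exact Finset.sum_nonneg fun m _ => hpow m i j
      linarith
    have hlim : Tendsto (fun q : ℕ => U⁻¹ i j - (x^(k*q) * U⁻¹) i j) atTop (𝓝 (U⁻¹ i j)) := by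
      simpa using (tendsto_const_nhds (x := U⁻¹ i j) (f := atTop)).sub htail
    exact ge_of_tendsto' hlim hnn
  exact mul_nonneg (inv_nonneg.2 hs0.le) hUij

end MetzlerAux


/-
Lemma 2.1: for a Metzler matrix `A ∈ ℝ^{n×n}` the following are equivalent:
(i) `A` is Hurwitz (all complex eigenvalues have negative real part);
(ii) `A p ≪ 0` for some vector `p ≫ 0`;
(iii) `A` is invertible and `-A⁻¹ ≥ 0`.
-/
theorem metzler_hurwitz_tfae {n : ℕ} (A : Matrix (Fin n) (Fin n) ℝ)
    (hMetzler : ∀ i j, i ≠ j → 0 ≤ A i j) :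
    List.TFAE
      [∀ μ : ℂ, μ ∈ spectrum ℂ (A.map (algebraMap ℝ ℂ)) → μ.re < 0,
       ∃ p : Fin n → ℝ, (∀ i, 0 < p i) ∧ ∀ i, A.mulVec p i < 0,
       IsUnit A ∧ ∀ i j, 0 ≤ (-A⁻¹) i j] := by
  tfae_have 1 → 3 := MetzlerAux.one_implies_three A hMetzler
  tfae_have 3 → 2 := fun h => MetzlerAux.three_implies_two A h.1 h.2
  tfae_have 2 → 1 := fun ⟨p, hp, hAp⟩ => MetzlerAux.two_implies_one A hMetzler p hp hAp
  tfae_finish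
end

section
/- For every matrix A ∈ ℝ^{n×n}, μ(A) ≤ μ(M(A)), i.e. the maximal real part of the complex eigenvalues of A is at most the maximal real part of the complex eigenvalues of the associated Metzler matrix M(A). -/
noncomputable section

/-- `μ(A)`: the maximal real part of the complex eigenvalues of a real square matrix `A`. -/
def muMax {n : ℕ} (A : Matrix (Fin n) (Fin n) ℝ) : ℝ :=
  sSup (Complex.re '' spectrum ℂ (A.map (algebraMap ℝ ℂ)))

/-- The Metzler matrix `M(A)` associated with `A`: same diagonal as `A`,
off-diagonal entries `|a_{ij}|`. -/
def metz {n : ℕ} (A : Matrix (Fin n) (Fin n) ℝ) : Matrix (Fin n) (Fin n) ℝ :=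
  Matrix.of fun i j => if i = j then A i j else |A i j|

section Aux

open Matrix Filter Pointwise

set_option maxHeartbeats 2000000

attribute [local instance] Matrix.linftyOpNormedRing Matrix.linftyOpNormedAlgebra

namespace MuAux


variable {n : ℕ}

local instance : CompleteSpace (Matrix (Fin n) (Fin n) ℂ) :=
  FiniteDimensional.complete ℂ _

lemma mulVec_norm_le (B : Matrix (Fin n) (Fin n) ℂ) (C : Matrix (Fin n) (Fin n) ℝ)
    (h : ∀ i j, ‖B i j‖ ≤ C i j) (v : Fin n → ℂ) (i : Fin n) :
    ‖(B *ᵥ v) i‖ ≤ (C *ᵥ fun j => ‖v j‖) i := by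
  simp only [mulVec, dotProduct]
  calc ‖∑ j, B i j * v j‖ ≤ ∑ j, ‖B i j * v j‖ := norm_sum_le _ _
    _ ≤ ∑ j, C i j * ‖v j‖ := Finset.sum_le_sum fun j _ => by
        rw [norm_mul]; exact mul_le_mul_of_nonneg_right (h i j) (norm_nonneg _)

lemma pow_mulVec_norm_le (B : Matrix (Fin n) (Fin n) ℂ) (C : Matrix (Fin n) (Fin n) ℝ)
    (h : ∀ i j, ‖B i j‖ ≤ C i j) (hC : ∀ i j, 0 ≤ C i j) (v : Fin n → ℂ) :
    ∀ (k : ℕ) (i : Fin n), ‖(B ^ k *ᵥ v) i‖ ≤ ((C ^ k) *ᵥ fun j => ‖v j‖) i := by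
  intro k
  induction k with
  | zero => intro i; simp [Matrix.one_mulVec]
  | succ k ih =>
      intro i
      rw [pow_succ', ← Matrix.mulVec_mulVec]
      calc ‖(B *ᵥ (B ^ k *ᵥ v)) i‖ ≤ (C *ᵥ fun j => ‖(B ^ k *ᵥ v) j‖) i :=
            mulVec_norm_le B C h _ i
        _ ≤ (C *ᵥ ((C ^ k) *ᵥ fun j => ‖v j‖)) i := by
            simp only [mulVec, dotProduct]
            exact Finset.sum_le_sum fun j _ =>
              mul_le_mul_of_nonneg_left (ih j) (hC i j)
        _ = ((C ^ (k + 1)) *ᵥ fun j => ‖v j‖) i := by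
            rw [Matrix.mulVec_mulVec, ← pow_succ']

lemma norm_map_complex (M : Matrix (Fin n) (Fin n) ℝ) :
    ‖M.map (algebraMap ℝ ℂ)‖ = ‖M‖ := by
  rw [Matrix.linfty_opNorm_def, Matrix.linfty_opNorm_def]
  congr 1
  apply Finset.sup_congr rfl
  intro i _
  refine Finset.sum_congr rfl fun j _ => ?_
  simp [Matrix.map_apply, Complex.nnnorm_real]

lemma exists_eigenvector {B : Matrix (Fin n) (Fin n) ℂ} {z : ℂ}
    (hz : z ∈ spectrum ℂ B) : ∃ v : Fin n → ℂ, v ≠ 0 ∧ B *ᵥ v = z • v := by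
  rw [spectrum.mem_iff] at hz
  have hdet : (algebraMap ℂ (Matrix (Fin n) (Fin n) ℂ) z - B).det = 0 := by
    by_contra hd
    exact hz ((Matrix.isUnit_iff_isUnit_det _).mpr (isUnit_iff_ne_zero.mpr hd))
  obtain ⟨v, hv, hmul⟩ := (Matrix.exists_mulVec_eq_zero_iff).mpr hdet
  refine ⟨v, hv, ?_⟩
  have h0 : (algebraMap ℂ (Matrix (Fin n) (Fin n) ℂ) z) *ᵥ v - B *ᵥ v = 0 := by
    rw [← Matrix.sub_mulVec]; exact hmul
  have h2 : (algebraMap ℂ (Matrix (Fin n) (Fin n) ℂ) z) *ᵥ v = z • v := by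
    rw [Algebra.algebraMap_eq_smul_one, Matrix.smul_mulVec, Matrix.one_mulVec]
  rw [h2] at h0
  exact (sub_eq_zero.mp h0).symm

lemma entry_abs_le_norm (M : Matrix (Fin n) (Fin n) ℝ) (i j : Fin n) : |M i j| ≤ ‖M‖ := by
  have h := Matrix.linfty_opNorm_mulVec M (Pi.single j 1)
  have h1 : ‖(Pi.single j 1 : Fin n → ℝ)‖ = 1 := by
    simp [Pi.norm_single]
  have h2 : (M *ᵥ Pi.single j 1) i = M i j := by
    simp [Matrix.mulVec_single]
  calc |M i j| = ‖(M *ᵥ Pi.single j 1) i‖ := by rw [h2, Real.norm_eq_abs]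
    _ ≤ ‖M *ᵥ Pi.single j 1‖ := norm_le_pi_norm _ i
    _ ≤ ‖M‖ * ‖(Pi.single j 1 : Fin n → ℝ)‖ := h
    _ = ‖M‖ := by rw [h1, mul_one]


lemma re_le_sSup (A : Matrix (Fin n) (Fin n) ℝ) {z : ℂ}
    (hz : z ∈ spectrum ℂ (A.map (algebraMap ℝ ℂ))) :
    z.re ≤ sSup (Complex.re '' spectrum ℂ ((metz A).map (algebraMap ℝ ℂ))) := by
  obtain ⟨v, hv0, hv⟩ := exists_eigenvector hz
  obtain ⟨i0, hi0'⟩ := Function.ne_iff.mp hv0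
  have hi0 : v i0 ≠ 0 := by simpa using hi0'
  have hne : Nonempty (Fin n) := ⟨i0⟩
  set MC : Matrix (Fin n) (Fin n) ℂ := (metz A).map (algebraMap ℝ ℂ) with hMC
  set t : ℝ := sSup (Complex.re '' spectrum ℂ MC) with ht
  set Bn : ℝ := ‖MC‖ with hBn
  have hspec_bound : ∀ μ ∈ spectrum ℂ MC, ‖μ‖ ≤ Bn := fun μ hμ =>
    spectrum.norm_le_norm_of_mem hμ
  have hbdd : BddAbove (Complex.re '' spectrum ℂ MC) := by
    refine ⟨Bn, ?_⟩
    rintro x ⟨μ, hμ, rfl⟩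
    exact (Complex.re_le_norm μ).trans (hspec_bound μ hμ)
  have ht_ge : ∀ μ ∈ spectrum ℂ MC, μ.re ≤ t := fun μ h =>
    le_csSup hbdd ⟨μ, h, rfl⟩
  have hBn0 : 0 ≤ Bn := norm_nonneg _
  refine le_of_forall_pos_le_add fun ε hε => ?_
  set c : ℝ := max (max (‖metz A‖ + 1 + Bn) (Bn + 1 - t)) (Bn ^ 2 / (2 * ε) - t) with hc
  have hc1 : ∀ i, |A i i| ≤ c := by
    intro i
    have he : |A i i| = |metz A i i| := by simp [metz]
    rw [he]
    calc |metz A i i| ≤ ‖metz A‖ := entry_abs_le_norm _ i i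
      _ ≤ c := le_max_of_le_left (le_max_of_le_left (by linarith))
  have hc2 : Bn ≤ c := by
    have h1 : ‖metz A‖ + 1 + Bn ≤ c := le_max_of_le_left (le_max_left _ _)
    have h2 : 0 ≤ ‖metz A‖ := norm_nonneg _
    linarith
  have hc3 : 0 < t + c := by
    have h1 : Bn + 1 - t ≤ c := le_max_of_le_left (le_max_right _ _)
    linarith
  have hc4 : Bn ^ 2 ≤ 2 * (t + c) * ε := by
    have h1 : Bn ^ 2 / (2 * ε) - t ≤ c := le_max_right _ _
    have h2 : Bn ^ 2 / (2 * ε) ≤ t + c := by linarith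
    calc Bn ^ 2 = Bn ^ 2 / (2 * ε) * (2 * ε) := by field_simp
      _ ≤ (t + c) * (2 * ε) := by
          apply mul_le_mul_of_nonneg_right h2; positivity
      _ = 2 * (t + c) * ε := by ring
  set B : Matrix (Fin n) (Fin n) ℂ := A.map (algebraMap ℝ ℂ) with hB
  set C : Matrix (Fin n) (Fin n) ℝ := metz A + c • (1 : Matrix (Fin n) (Fin n) ℝ) with hCdef
  set Bc : Matrix (Fin n) (Fin n) ℂ := B + (c : ℂ) • (1 : Matrix (Fin n) (Fin n) ℂ) with hBcdef
  have hCdiag : ∀ i, C i i = A i i + c := by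
    intro i; simp [hCdef, metz, Matrix.one_apply]
  have hCoff : ∀ i j, i ≠ j → C i j = |A i j| := by
    intro i j hij; simp [hCdef, metz, Matrix.one_apply, hij]
  have hBC : ∀ i j, ‖Bc i j‖ ≤ C i j := by
    intro i j
    by_cases hij : i = j
    · subst hij
      have he : Bc i i = ((A i i + c : ℝ) : ℂ) := by
        simp [hBcdef, hB, Matrix.one_apply, Matrix.map_apply]
      rw [he, hCdiag i, Complex.norm_real, Real.norm_eq_abs,
        abs_of_nonneg (by linarith [neg_abs_le (A i i), hc1 i])]
    · have he : Bc i j = ((A i j : ℝ) : ℂ) := by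
        simp [hBcdef, hB, Matrix.one_apply, hij, Matrix.map_apply]
      rw [he, hCoff i j hij, Complex.norm_real, Real.norm_eq_abs]
  have hC0 : ∀ i j, 0 ≤ C i j := by
    intro i j
    by_cases hij : i = j
    · subst hij; rw [hCdiag i]; linarith [neg_abs_le (A i i), hc1 i]
    · rw [hCoff i j hij]; exact abs_nonneg _
  have hBcv : Bc *ᵥ v = (z + c) • v := by
    rw [hBcdef, Matrix.add_mulVec, hv, Matrix.smul_mulVec, Matrix.one_mulVec,
      add_smul]
  have hpow : ∀ k : ℕ, Bc ^ k *ᵥ v = ((z + c) ^ k) • v := by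
    intro k
    induction k with
    | zero => simp [Matrix.one_mulVec]
    | succ k ih =>
        rw [pow_succ', ← Matrix.mulVec_mulVec, ih, Matrix.mulVec_smul, hBcv,
          smul_smul, ← pow_succ]
  set w : Fin n → ℝ := fun j => ‖v j‖ with hw
  set m : ℝ := ‖v i0‖ with hm
  have hmpos : 0 < m := by
    rw [hm]; exact norm_pos_iff.mpr hi0
  set W : ℝ := ‖w‖ with hW
  have hWpos : 0 < W := by
    have hle : m ≤ W := by
      calc m = |w i0| := by rw [hm, hw]; simp
        _ ≤ W := by rw [hW, ← Real.norm_eq_abs]; exact norm_le_pi_norm w i0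
    linarith
  have hkey : ∀ k : ℕ, ‖z + (c : ℂ)‖ ^ k * m ≤ ‖C ^ k‖ * W := by
    intro k
    have h1 : ‖(Bc ^ k *ᵥ v) i0‖ = ‖z + (c : ℂ)‖ ^ k * m := by
      rw [hpow k]; simp [hm, norm_smul, norm_pow]
    have h2 := pow_mulVec_norm_le Bc C hBC hC0 v k i0
    have h3 : ((C ^ k) *ᵥ w) i0 ≤ ‖(C ^ k) *ᵥ w‖ := by
      calc ((C ^ k) *ᵥ w) i0 ≤ |((C ^ k) *ᵥ w) i0| := le_abs_self _
        _ ≤ ‖(C ^ k) *ᵥ w‖ := by rw [← Real.norm_eq_abs]; exact norm_le_pi_norm _ i0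
    have h4 : ‖(C ^ k) *ᵥ w‖ ≤ ‖C ^ k‖ * W := Matrix.linfty_opNorm_mulVec _ _
    rw [← h1]
    exact h2.trans (h3.trans h4)
  set D : Matrix (Fin n) (Fin n) ℂ := C.map (algebraMap ℝ ℂ) with hD
  have hDk : ∀ k : ℕ, ‖D ^ k‖ = ‖C ^ k‖ := by
    intro k
    have he : D ^ k = (C ^ k).map (algebraMap ℝ ℂ) := by
      rw [hD, ← RingHom.mapMatrix_apply, ← map_pow, RingHom.mapMatrix_apply]
    rw [he, norm_map_complex]
  set ρ : ENNReal := spectralRadius ℂ D with hρ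
  have hρtop : ρ ≠ ⊤ :=
    ne_top_of_le_ne_top ENNReal.coe_ne_top (spectrum.spectralRadius_le_nnnorm D)
  set r : ℝ := ρ.toReal with hr
  have htend : Tendsto (fun k : ℕ => ‖D ^ k‖ ^ (1 / (k : ℝ))) atTop (nhds r) := by
    have h := spectrum.pow_norm_pow_one_div_tendsto_nhds_spectralRadius D
    have h2 := (ENNReal.tendsto_toReal hρtop).comp h
    refine h2.congr fun k => ?_
    simp only [Function.comp_apply]
    rw [ENNReal.toReal_ofReal (by positivity)]
  have hzc : ‖z + (c : ℂ)‖ ≤ r := by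
    have htend2 : Tendsto (fun k : ℕ => ‖D ^ k‖ ^ (1 / (k : ℝ)) * (W / m) ^ (1 / (k : ℝ)))
        atTop (nhds (r * 1)) := by
      refine htend.mul ?_
      have hx : Tendsto (fun k : ℕ => (1 / (k : ℝ))) atTop (nhds 0) :=
        tendsto_one_div_atTop_nhds_zero_nat
      have hcont : ContinuousAt (fun x : ℝ => (W / m) ^ x) 0 :=
        Real.continuousAt_const_rpow (by positivity)
      have h5 := hcont.tendsto.comp hx
      simpa [Function.comp_def] using h5
    rw [mul_one] at htend2
    refine ge_of_tendsto htend2 ?_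
    filter_upwards [eventually_ge_atTop 1] with k hk
    have hk0 : (k : ℝ) ≠ 0 := by positivity
    have h5 : ‖z + (c : ℂ)‖ ^ k ≤ ‖D ^ k‖ * (W / m) := by
      rw [hDk k]
      have h6 : ‖z + (c : ℂ)‖ ^ k ≤ ‖C ^ k‖ * W / m := by
        rw [le_div_iff₀ hmpos]; exact hkey k
      calc ‖z + (c : ℂ)‖ ^ k ≤ ‖C ^ k‖ * W / m := h6
        _ = ‖C ^ k‖ * (W / m) := by ring
    have h7 : (‖z + (c : ℂ)‖ ^ k) ^ (1 / (k : ℝ)) ≤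
        (‖D ^ k‖ * (W / m)) ^ (1 / (k : ℝ)) :=
      Real.rpow_le_rpow (by positivity) h5 (by positivity)
    have h8 : (‖z + (c : ℂ)‖ ^ k) ^ (1 / (k : ℝ)) = ‖z + (c : ℂ)‖ := by
      rw [← Real.rpow_natCast ‖z + (c : ℂ)‖ k, ← Real.rpow_mul (norm_nonneg _),
        mul_one_div, div_self hk0, Real.rpow_one]
    have h9 : (‖D ^ k‖ * (W / m)) ^ (1 / (k : ℝ)) =
        ‖D ^ k‖ ^ (1 / (k : ℝ)) * (W / m) ^ (1 / (k : ℝ)) :=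
      Real.mul_rpow (norm_nonneg _) (by positivity)
    rw [h8, h9] at h7
    exact h7
  have hρle : r ≤ Real.sqrt ((t + c) ^ 2 + Bn ^ 2) := by
    refine ENNReal.toReal_le_of_le_ofReal (Real.sqrt_nonneg _) ?_
    rw [hρ, spectralRadius]
    refine iSup₂_le fun μ hμ => ?_
    have hDspec : spectrum ℂ D = spectrum ℂ MC + ({(c : ℂ)} : Set ℂ) := by
      have he : D = MC + algebraMap ℂ (Matrix (Fin n) (Fin n) ℂ) (c : ℂ) := by
        rw [hD, hCdef, hMC]
        ext i j
        by_cases hij : i = j <;>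
          simp [Matrix.map_apply, Matrix.one_apply, hij, Algebra.algebraMap_eq_smul_one,
            metz]
      rw [he, ← spectrum.add_singleton_eq]
    rw [hDspec] at hμ
    obtain ⟨ν, hν, cc, hcc, rfl⟩ := Set.mem_add.mp hμ
    rw [Set.mem_singleton_iff] at hcc
    subst hcc
    rw [← enorm_eq_nnnorm, ← ofReal_norm]
    refine ENNReal.ofReal_le_ofReal ?_
    have hre : ν.re ≤ t := ht_ge ν hν
    have hrege : -Bn ≤ ν.re := by
      have h2 : |ν.re| ≤ ‖ν‖ := Complex.abs_re_le_norm ν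
      have h3 := hspec_bound ν hν
      have h4 := neg_abs_le ν.re
      linarith
    have him : |ν.im| ≤ Bn := (Complex.abs_im_le_norm ν).trans (hspec_bound ν hν)
    have h1 : 0 ≤ ν.re + c := by linarith
    have hnorm : ‖ν + (c : ℂ)‖ ^ 2 = (ν.re + c) ^ 2 + ν.im ^ 2 := by
      rw [Complex.sq_norm, Complex.normSq_apply]
      simp only [Complex.add_re, Complex.add_im, Complex.ofReal_re, Complex.ofReal_im,
        add_zero]
      ring
    refine (Real.le_sqrt (norm_nonneg _) (by positivity)).mpr ?_
    rw [hnorm]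
    have h2 : (ν.re + c) ^ 2 ≤ (t + c) ^ 2 := by nlinarith
    have h3 : ν.im ^ 2 ≤ Bn ^ 2 := by nlinarith [abs_nonneg ν.im, sq_abs ν.im]
    linarith
  have hsqrt : Real.sqrt ((t + c) ^ 2 + Bn ^ 2) ≤ (t + c) + ε := by
    have h1 : (t + c) ^ 2 + Bn ^ 2 ≤ ((t + c) + ε) ^ 2 := by nlinarith
    calc Real.sqrt ((t + c) ^ 2 + Bn ^ 2) ≤ Real.sqrt (((t + c) + ε) ^ 2) :=
          Real.sqrt_le_sqrt h1
      _ = (t + c) + ε := Real.sqrt_sq (by linarith)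
  have hfinal : z.re + c ≤ ‖z + (c : ℂ)‖ := by
    have h := Complex.re_le_norm (z + (c : ℂ))
    simpa using h
  linarith


theorem spectrum_empty_of_zero {B : Matrix (Fin 0) (Fin 0) ℂ} :
    spectrum ℂ B = ∅ := by
  rw [Set.eq_empty_iff_forall_notMem]
  intro z hz
  rw [spectrum.mem_iff] at hz
  exact hz (isUnit_of_subsingleton _)

end MuAux

end Aux

/-- For every real matrix `A`, `μ(A) ≤ μ(M(A))`. -/
theorem muMax_le_muMax_metz {n : ℕ} (A : Matrix (Fin n) (Fin n) ℝ) :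
    muMax A ≤ muMax (metz A) := by
  rcases Nat.eq_zero_or_pos n with hn | hn
  · subst hn
    unfold muMax
    rw [MuAux.spectrum_empty_of_zero, MuAux.spectrum_empty_of_zero]
  · have hne : Nonempty (Fin n) := ⟨⟨0, hn⟩⟩
    unfold muMax
    have hnontriv : Nontrivial (Matrix (Fin n) (Fin n) ℂ) := by infer_instance
    have hspec : (spectrum ℂ (A.map (algebraMap ℝ ℂ))).Nonempty := by
      letI := Matrix.linftyOpNormedRing (n := Fin n) (α := ℂ)
      letI := Matrix.linftyOpNormedAlgebra (n := Fin n) (R := ℂ) (α := ℂ)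
      letI : CompleteSpace (Matrix (Fin n) (Fin n) ℂ) :=
        FiniteDimensional.complete ℂ _
      exact spectrum.nonempty _
    refine csSup_le (hspec.image _) ?_
    rintro x ⟨z, hz, rfl⟩
    exact MuAux.re_le_sSup A hz

end
end

section
/- Consider the time-delay switched linear system ẋ(t) = A⁰_{σ(t)} x(t) + ∫_{[−h,0]} d[ν_{σ(t)}(θ)] x(t+θ), t ≥ 0, σ ∈ Σ₊, with N constituent subsystems (A⁰_k, ν_k), k = 1,…,N. If there exists a vector ξ ∈ ℝⁿ with ξ ≫ 0 such that (M(A⁰_k) + V(ν_k)) ξ ≪ 0 for every k = 1,…,N, then the switched system is exponentially stable under arbitrary switching: there exist M > 0 and α > 0 such that for every initial function φ ∈ C([−h,0],ℝⁿ), every switching signal σ ∈ Σ₊, and every corresponding solution x, one has ‖x(t)‖ ≤ M e^{−αt} ‖φ‖ for all t ≥ 0. -/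
open MeasureTheory Set Filter Matrix
open scoped ENNReal

noncomputable section

/-- Integral of a real function against a finite signed Borel measure. -/
def sint {α : Type*} [MeasurableSpace α] (s : MeasureTheory.SignedMeasure α) (f : α → ℝ) : ℝ :=
  (∫ a, f a ∂s.toJordanDecomposition.posPart) - ∫ a, f a ∂s.toJordanDecomposition.negPart

/-- Total variation of a finite signed measure, evaluated on the whole space. -/
def tvar {α : Type*} [MeasurableSpace α] (s : MeasureTheory.SignedMeasure α) : ℝ :=
  (s.totalVariation Set.univ).toReal

/-- Row-sum matrix norm (the operator norm induced by the `∞`-norm). -/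
def matNorm {p q : ℕ} (A : Matrix (Fin p) (Fin q) ℝ) : ℝ :=
  ⨆ i, ∑ j, |A i j|

/-- The matrix `V(ν)` of total variations of a matrix of signed measures. -/
def Vmat {h : ℝ} {p q : ℕ}
    (ν : Fin p → Fin q → MeasureTheory.SignedMeasure (Set.Icc (-h) (0:ℝ))) :
    Matrix (Fin p) (Fin q) ℝ :=
  Matrix.of fun i j => tvar (ν i j)

/-- The norm `‖ν‖ = max_i Σ_j |ν_{ij}|([-h,0])` of a matrix of signed measures. -/
def mnorm {h : ℝ} {p q : ℕ}
    (ν : Fin p → Fin q → MeasureTheory.SignedMeasure (Set.Icc (-h) (0:ℝ))) : ℝ :=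
  ⨆ i, ∑ j, tvar (ν i j)

/-- A switching signal: piecewise constant, right continuous, with strictly
positive dwell time (and normalized to be constant on `(-∞, 0]`). -/
def IsSwitchingSignal {N : ℕ} (σ : ℝ → Fin N) : Prop :=
  (∀ t ≤ (0:ℝ), σ t = σ 0) ∧
  ∃ d : ℝ, 0 < d ∧ ∃ τ : ℕ → ℝ, τ 0 = 0 ∧ (∀ k, τ k + d ≤ τ (k + 1)) ∧
    ∀ k : ℕ, ∀ t ∈ Set.Ico (τ k) (τ (k + 1)), σ t = σ (τ k)

/-- `x` is a solution of the switched delay system `ẋ(t) = A⁰_{σ(t)} x(t) +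
∫_{[-h,0]} d[ν_{σ(t)}(θ)] x(t+θ)` with switching signal `σ` and initial function `φ`. -/
def IsSolution (h : ℝ) {N n : ℕ} (σ : ℝ → Fin N)
    (A : Fin N → Matrix (Fin n) (Fin n) ℝ)
    (ν : Fin N → Fin n → Fin n → MeasureTheory.SignedMeasure (Set.Icc (-h) (0:ℝ)))
    (φ : C(Set.Icc (-h) (0:ℝ), Fin n → ℝ)) (x : ℝ → Fin n → ℝ) : Prop :=
  ContinuousOn x (Set.Ici (-h)) ∧
  (∀ θ : Set.Icc (-h) (0:ℝ), x (θ : ℝ) = φ θ) ∧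
  ∀ t : ℝ, 0 ≤ t → (∀ᶠ s in nhds t, σ s = σ t) → ∀ i,
    HasDerivWithinAt (fun s => x s i)
      ((∑ j, A (σ t) i j * x t j) +
        ∑ j, sint (ν (σ t) i j) fun θ => x (t + (θ : ℝ)) j)
      (Set.Ici t) t

/-- Exponential stability of the switched system under arbitrary switching. -/
def ExpStableSw (h : ℝ) {N n : ℕ}
    (A : Fin N → Matrix (Fin n) (Fin n) ℝ)
    (ν : Fin N → Fin n → Fin n → MeasureTheory.SignedMeasure (Set.Icc (-h) (0:ℝ))) : Prop :=
  ∃ M > (0:ℝ), ∃ α > (0:ℝ), ∀ σ : ℝ → Fin N, IsSwitchingSignal σ →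
    ∀ φ x, IsSolution h σ A ν φ x →
      ∀ t ≥ (0:ℝ), ‖x t‖ ≤ M * Real.exp (-α * t) * ‖φ‖

/-- `x` is a solution of the (non-switched) delay system `(A, ν)` with initial function `φ`. -/
def IsSolution1 (h : ℝ) {n : ℕ} (A : Matrix (Fin n) (Fin n) ℝ)
    (ν : Fin n → Fin n → MeasureTheory.SignedMeasure (Set.Icc (-h) (0:ℝ)))
    (φ : C(Set.Icc (-h) (0:ℝ), Fin n → ℝ)) (x : ℝ → Fin n → ℝ) : Prop :=
  ContinuousOn x (Set.Ici (-h)) ∧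
  (∀ θ : Set.Icc (-h) (0:ℝ), x (θ : ℝ) = φ θ) ∧
  ∀ t : ℝ, 0 ≤ t → ∀ i,
    HasDerivWithinAt (fun s => x s i)
      ((∑ j, A i j * x t j) + ∑ j, sint (ν i j) fun θ => x (t + (θ : ℝ)) j)
      (Set.Ici t) t

/-- Exponential stability of a single (non-switched) delay system. -/
def ExpStable1 (h : ℝ) {n : ℕ} (A : Matrix (Fin n) (Fin n) ℝ)
    (ν : Fin n → Fin n → MeasureTheory.SignedMeasure (Set.Icc (-h) (0:ℝ))) : Prop :=
  ∃ M > (0:ℝ), ∃ α > (0:ℝ), ∀ φ x, IsSolution1 h A ν φ x →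
    ∀ t ≥ (0:ℝ), ‖x t‖ ≤ M * Real.exp (-α * t) * ‖φ‖

lemma tvar_nonneg {α : Type*} [MeasurableSpace α] (s : MeasureTheory.SignedMeasure α) :
    0 ≤ tvar s := ENNReal.toReal_nonneg

lemma abs_sint_le {α : Type*} [MeasurableSpace α] (s : MeasureTheory.SignedMeasure α)
    {f : α → ℝ} {C : ℝ} (hf : ∀ a, |f a| ≤ C) : |sint s f| ≤ tvar s * C := by
  have h1 : ‖∫ a, f a ∂s.toJordanDecomposition.posPart‖
      ≤ C * (s.toJordanDecomposition.posPart Set.univ).toReal :=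
    MeasureTheory.norm_integral_le_of_norm_le_const
      (Filter.Eventually.of_forall fun a => by simpa [Real.norm_eq_abs] using hf a)
  have h2 : ‖∫ a, f a ∂s.toJordanDecomposition.negPart‖
      ≤ C * (s.toJordanDecomposition.negPart Set.univ).toReal :=
    MeasureTheory.norm_integral_le_of_norm_le_const
      (Filter.Eventually.of_forall fun a => by simpa [Real.norm_eq_abs] using hf a)
  have h3 : tvar s = (s.toJordanDecomposition.posPart Set.univ).toReal
      + (s.toJordanDecomposition.negPart Set.univ).toReal := by
    simp only [tvar, MeasureTheory.SignedMeasure.totalVariation, Measure.add_apply]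
    exact ENNReal.toReal_add (measure_ne_top _ _) (measure_ne_top _ _)
  rw [Real.norm_eq_abs] at h1 h2
  have h4 : |sint s f| ≤ |∫ a, f a ∂s.toJordanDecomposition.posPart|
      + |∫ a, f a ∂s.toJordanDecomposition.negPart| := by
    have := abs_add_le (∫ a, f a ∂s.toJordanDecomposition.posPart)
      (-(∫ a, f a ∂s.toJordanDecomposition.negPart))
    simpa [sint, sub_eq_add_neg, abs_neg] using this
  rw [h3]
  linarith

set_option maxHeartbeats 2000000 in
/-- Theorem 1: if there is a vector `ξ ≫ 0` with `(M(A⁰_k) + V(ν_k)) ξ ≪ 0` for every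
`k`, then the time-delay switched linear system `(A, ν)` is exponentially stable under
arbitrary switching. -/
theorem expStable_of_common_LCLF {N n : ℕ} (h : ℝ) (hh : 0 < h)
    (A : Fin N → Matrix (Fin n) (Fin n) ℝ)
    (ν : Fin N → Fin n → Fin n → MeasureTheory.SignedMeasure (Set.Icc (-h) (0:ℝ)))
    (ξ : Fin n → ℝ) (hξ : ∀ i, 0 < ξ i)
    (hLCLF : ∀ k, ∀ i, ((metz (A k) + Vmat (ν k)).mulVec ξ) i < 0) :
    ExpStableSw h A ν := by
  classical
  rcases Nat.eq_zero_or_pos n with hn | hn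
  · refine ⟨1, one_pos, 1, one_pos, fun σ hσ φ x hsol t ht => ?_⟩
    subst hn
    have hx0 : x t = 0 := funext fun i => i.elim0
    rw [hx0, norm_zero]
    positivity
  rcases Nat.eq_zero_or_pos N with hN | hN
  · refine ⟨1, one_pos, 1, one_pos, fun σ hσ φ x hsol t ht => ?_⟩
    subst hN
    exact (σ 0).elim0
  -- nonempty index sets
  have hnen : (Finset.univ : Finset (Fin n)).Nonempty := ⟨⟨0, hn⟩, Finset.mem_univ _⟩
  have hneNn : (Finset.univ : Finset (Fin N × Fin n)).Nonempty :=
    ⟨(⟨0, hN⟩, ⟨0, hn⟩), Finset.mem_univ _⟩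
  -- constants
  set ξmin : ℝ := Finset.univ.inf' hnen ξ with hξmindef
  set ξmax : ℝ := Finset.univ.sup' hnen ξ with hξmaxdef
  have hξminpos : 0 < ξmin := (Finset.lt_inf'_iff hnen).2 fun i _ => hξ i
  have hξminle : ∀ i, ξmin ≤ ξ i := fun i => Finset.inf'_le ξ (Finset.mem_univ i)
  have hξmaxle : ∀ i, ξ i ≤ ξmax := fun i => Finset.le_sup' ξ (Finset.mem_univ i)
  have hξmaxpos : 0 < ξmax := lt_of_lt_of_le (hξ ⟨0, hn⟩) (hξmaxle ⟨0, hn⟩)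
  set ε0 : ℝ := Finset.univ.inf' hneNn
    (fun p : Fin N × Fin n => -(((metz (A p.1) + Vmat (ν p.1)).mulVec ξ) p.2)) with hε0def
  have hε0pos : 0 < ε0 := (Finset.lt_inf'_iff hneNn).2 fun p _ => by
    have := hLCLF p.1 p.2; linarith
  have hε0le : ∀ k i, ε0 ≤ -(((metz (A k) + Vmat (ν k)).mulVec ξ) i) := fun k i =>
    Finset.inf'_le (fun p : Fin N × Fin n => -(((metz (A p.1) + Vmat (ν p.1)).mulVec ξ) p.2))
      (Finset.mem_univ (k, i))
  set Cv : ℝ := Finset.univ.sup' hneNn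
    (fun p : Fin N × Fin n => ∑ j, tvar (ν p.1 p.2 j) * ξ j) with hCvdef
  have hCvle : ∀ k i, (∑ j, tvar (ν k i j) * ξ j) ≤ Cv := fun k i =>
    Finset.le_sup' (fun p : Fin N × Fin n => ∑ j, tvar (ν p.1 p.2 j) * ξ j)
      (Finset.mem_univ (k, i))
  have hCv0 : 0 ≤ Cv := le_trans
    (Finset.sum_nonneg fun j _ => mul_nonneg (tvar_nonneg _) (hξ j).le)
    (hCvle ⟨0, hN⟩ ⟨0, hn⟩)
  -- choice of α
  obtain ⟨α, hαsm, hαpos⟩ : ∃ a : ℝ, (a * ξmax + (Real.exp (a * h) - 1) * Cv < ε0) ∧ 0 < a := by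
    have hcont : ContinuousAt (fun a : ℝ => a * ξmax + (Real.exp (a * h) - 1) * Cv) 0 := by
      fun_prop
    have h0 : (fun a : ℝ => a * ξmax + (Real.exp (a * h) - 1) * Cv) 0 < ε0 := by
      simpa using hε0pos
    have hev : ∀ᶠ a in nhds (0:ℝ), a * ξmax + (Real.exp (a * h) - 1) * Cv < ε0 :=
      hcont.eventually (eventually_lt_nhds h0)
    obtain ⟨a, ha1, ha2⟩ := ((hev.filter_mono nhdsWithin_le_nhds).and
      self_mem_nhdsWithin).exists (f := nhdsWithin (0:ℝ) (Set.Ioi 0))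
    exact ⟨a, ha1, ha2⟩
  -- key inequality
  have hCineq : ∀ k i, α * ξ i + ((∑ j, (if i = j then A k i j else |A k i j|) * ξ j)
      + Real.exp (α * h) * ∑ j, tvar (ν k i j) * ξ j) < 0 := by
    intro k i
    have hmv : ((metz (A k) + Vmat (ν k)).mulVec ξ) i
        = (∑ j, (if i = j then A k i j else |A k i j|) * ξ j) + ∑ j, tvar (ν k i j) * ξ j := by
      simp [Matrix.mulVec, dotProduct, metz, Vmat, add_mul, Finset.sum_add_distrib]
    have h1 := hε0le k i
    rw [hmv] at h1
    have h2 : α * ξ i ≤ α * ξmax := mul_le_mul_of_nonneg_left (hξmaxle i) hαpos.le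
    have h3 : (Real.exp (α * h) - 1) * (∑ j, tvar (ν k i j) * ξ j)
        ≤ (Real.exp (α * h) - 1) * Cv := by
      apply mul_le_mul_of_nonneg_left (hCvle k i)
      have : (1:ℝ) ≤ Real.exp (α * h) := Real.one_le_exp (by positivity)
      linarith
    nlinarith [hαsm]
  -- main bound
  refine ⟨ξmax / ξmin, div_pos hξmaxpos hξminpos, α, hαpos, fun σ hσ φ x hsol t ht => ?_⟩
  obtain ⟨hσ0, d, hd, τ, hτ0, hτd, hτσ⟩ := hσ
  obtain ⟨hxc, hxφ, hxd⟩ := hsol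
  set K0 := ‖φ‖ with hK0def
  have hK00 : 0 ≤ K0 := norm_nonneg _
  have hxc_at : ∀ u : ℝ, -h < u → ContinuousAt x u := fun u hu =>
    hxc.continuousAt (Ici_mem_nhds hu)
  have hxic : ∀ (i : Fin n) (u : ℝ), -h < u → ContinuousAt (fun s => x s i) u := fun i u hu =>
    ((continuous_apply i).continuousAt).comp (hxc_at u hu)
  have hinit : ∀ u, -h ≤ u → u ≤ 0 → ∀ j, |x u j| ≤ K0 := by
    intro u hu1 hu2 j
    have hx : x u = φ ⟨u, hu1, hu2⟩ := hxφ ⟨u, hu1, hu2⟩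
    rw [hx]
    exact le_trans (norm_le_pi_norm (φ ⟨u, hu1, hu2⟩) j) (φ.norm_coe_le_norm _)
  -- the key claim
  have key : ∀ K, K0 / ξmin < K → ∀ s, 0 ≤ s → ∀ i, |x s i| * Real.exp (α * s) ≤ K * ξ i := by
    intro K hK
    have hKpos : 0 < K := lt_of_le_of_lt (div_nonneg hK00 hξminpos.le) hK
    have hK0' : K0 < K * ξmin := (div_lt_iff₀ hξminpos).1 hK
    by_contra hbad
    push_neg at hbad
    obtain ⟨s0, hs00, i0, hi0⟩ := hbad
    set B : Set ℝ := {u | 0 ≤ u ∧ ∃ i, K * ξ i < |x u i| * Real.exp (α * u)} with hBdef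
    have hBne : B.Nonempty := ⟨s0, hs00, i0, hi0⟩
    have hBbdd : BddBelow B := ⟨0, fun u hu => hu.1⟩
    set T := sInf B with hTdef
    have hT0 : 0 ≤ T := le_csInf hBne fun u hu => hu.1
    have hTnB : T ∉ B := by
      intro hTB
      obtain ⟨hT0', i, hi⟩ := hTB
      rcases eq_or_lt_of_le hT0 with h0T | h0T
      · have h1 : |x 0 i| ≤ K0 := hinit 0 (by linarith) le_rfl i
        rw [← h0T] at hi
        simp only [mul_zero, Real.exp_zero, mul_one] at hi
        linarith [mul_le_mul_of_nonneg_left (hξminle i) hKpos.le]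
      · have hg : ContinuousAt (fun u => |x u i| * Real.exp (α * u)) T :=
          ((hxic i T (by linarith)).abs.mul (by fun_prop))
        have hev : ∀ᶠ u in nhds T, K * ξ i < |x u i| * Real.exp (α * u) :=
          hg.eventually (eventually_gt_nhds hi)
        obtain ⟨u, ⟨hKu, hu0⟩, huT⟩ := (((hev.and (eventually_gt_nhds h0T)).filter_mono
          nhdsWithin_le_nhds).and self_mem_nhdsWithin).exists
          (f := nhdsWithin T (Set.Iio T))
        exact absurd (csInf_le hBbdd ⟨hu0.le, i, hKu⟩) (not_le.2 huT)
    have hHb : ∀ u, -h ≤ u → u ≤ T → ∀ j, |x u j| * Real.exp (α * u) ≤ K * ξ j := by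
      intro u hu1 hu2 j
      rcases le_or_gt u 0 with hu0 | hu0
      · have h1 : |x u j| ≤ K0 := hinit u hu1 hu0 j
        have h2 : Real.exp (α * u) ≤ 1 := Real.exp_le_one_iff.2 (by nlinarith)
        have h3 : K * ξmin ≤ K * ξ j := mul_le_mul_of_nonneg_left (hξminle j) hKpos.le
        nlinarith [abs_nonneg (x u j), Real.exp_pos (α * u)]
      · by_contra hc
        push_neg at hc
        have huB : u ∈ B := ⟨hu0.le, j, hc⟩
        have hTu : T = u := le_antisymm (csInf_le hBbdd huB) hu2
        exact hTnB (show T ∈ B by rw [hTu]; exact huB)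
    -- locate the switching interval containing T
    have hτge : ∀ m : ℕ, (m : ℝ) * d ≤ τ m := by
      intro m
      induction m with
      | zero => simp [hτ0]
      | succ p ih =>
        have h1 := hτd p
        push_cast
        push_cast at ih
        linarith
    obtain ⟨k1, hk1⟩ := exists_nat_gt (T / d)
    have hPex : ∃ m : ℕ, T < τ m := by
      refine ⟨k1, lt_of_lt_of_le ?_ (hτge k1)⟩
      rw [div_lt_iff₀ hd] at hk1
      linarith
    have hfindpos : 0 < Nat.find hPex := by
      rcases Nat.eq_zero_or_pos (Nat.find hPex) with h0 | h0
      · exfalso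
        have hsp := Nat.find_spec hPex
        rw [h0, hτ0] at hsp
        exact absurd hsp (not_lt.2 hT0)
      · exact h0
    set m : ℕ := Nat.find hPex - 1 with hmdef
    have hmsucc : m + 1 = Nat.find hPex := by omega
    have hT2 : T < τ (m + 1) := by rw [hmsucc]; exact Nat.find_spec hPex
    have hmT : τ m ≤ T := not_lt.1 (Nat.find_min hPex (by omega))
    set k : Fin N := σ T with hkdef
    have hσT : σ T = σ (τ m) := hτσ m T ⟨hmT, hT2⟩
    have hσs : ∀ s, T < s → s < τ (m + 1) → σ s = k := by
      intro s h1 h2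
      rw [hτσ m s ⟨le_trans hmT h1.le, h2⟩, hkdef, hσT]
    have hσev : ∀ s, T < s → s < τ (m + 1) → (∀ᶠ u in nhds s, σ u = σ s) := by
      intro s h1 h2
      have hmem : Set.Ioo T (τ (m + 1)) ∈ nhds s := Ioo_mem_nhds h1 h2
      exact Filter.eventually_of_mem hmem fun u hu => by
        rw [hσs u hu.1 hu.2, hσs s h1 h2]
    set F : Fin n → ℝ → ℝ := fun i s =>
      (∑ j, A k i j * x s j) + ∑ j, sint (ν k i j) fun θ => x (s + (θ : ℝ)) j with hFdef
    have hder : ∀ (i : Fin n) (s : ℝ), T < s → s < τ (m + 1) →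
        HasDerivWithinAt (fun u => x u i) (F i s) (Set.Ici s) s := by
      intro i s h1 h2
      have h0s : (0:ℝ) ≤ s := le_trans hT0 h1.le
      have hds := hxd s h0s (hσev s h1 h2) i
      rw [hσs s h1 h2] at hds
      simpa [hFdef] using hds
    -- for every coordinate the bound persists just after T
    have hafter : ∀ i : Fin n, ∃ δ > 0, ∀ z, T < z → z ≤ T + δ →
        |x z i| * Real.exp (α * z) ≤ K * ξ i := by
      intro i
      rcases lt_or_eq_of_le (hHb T (by linarith) le_rfl i) with hlt | heq
      · -- non-touching coordinate: continuity suffices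
        have hg : ContinuousAt (fun u => |x u i| * Real.exp (α * u)) T :=
          ((hxic i T (by linarith)).abs.mul (by fun_prop))
        have hev : ∀ᶠ u in nhds T, |x u i| * Real.exp (α * u) < K * ξ i :=
          hg.eventually (eventually_lt_nhds hlt)
        obtain ⟨δ, hδpos, hball⟩ := Metric.eventually_nhds_iff.1 hev
        refine ⟨δ / 2, by positivity, fun z h1 h2 => ?_⟩
        have hdz : dist z T < δ := by
          rw [Real.dist_eq, abs_of_pos (sub_pos.2 h1)]; linarith
        exact (hball hdz).le
      · -- touching coordinate
        set eT : ℝ := Real.exp (α * T) with heTdef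
        have heTpos : 0 < eT := Real.exp_pos _
        set β : ℝ := K / eT with hβdef
        have hβpos : 0 < β := div_pos hKpos heTpos
        have hxTabs : |x T i| = β * ξ i := by
          have h1 : |x T i| = K * ξ i / eT := (eq_div_iff heTpos.ne').2 heq
          rw [h1, hβdef]; ring
        have hxTpos : 0 < |x T i| := by
          rw [hxTabs]; exact mul_pos hβpos (hξ i)
        set e : ℝ := if 0 ≤ x T i then 1 else -1 with hedef
        have habsE : |e| = 1 := by
          rw [hedef]; split_ifs <;> simp
        have hyT : e * x T i = |x T i| := by
          rw [hedef]; split_ifs with hsign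
          · rw [one_mul, abs_of_nonneg hsign]
          · rw [neg_one_mul, abs_of_neg (lt_of_not_ge hsign)]
        set S1 : ℝ := ∑ j ∈ Finset.univ.erase i, |A k i j| * ξ j with hS1def
        set S2 : ℝ := ∑ j, tvar (ν k i j) * ξ j with hS2def
        set E : ℝ := Real.exp (α * h) with hEdef
        have hE1 : (1:ℝ) ≤ E := Real.one_le_exp (by positivity)
        have hWsplit : (∑ j, (if i = j then A k i j else |A k i j|) * ξ j)
            = A k i i * ξ i + S1 := by
          rw [hS1def, ← Finset.sum_erase_add Finset.univ _ (Finset.mem_univ i), if_pos rfl,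
            Finset.sum_congr rfl (fun j hj => by
              rw [if_neg (Ne.symm (Finset.mem_erase.1 hj).1)] :
              ∀ j ∈ Finset.univ.erase i,
                (if i = j then A k i j else |A k i j|) * ξ j = |A k i j| * ξ j)]
          ring
        have hmargin : A k i i * ξ i + S1 + E * S2 < -(α * ξ i) := by
          have h1 := hCineq k i
          rw [hWsplit] at h1
          linarith
        set ρ : ℝ := -(α * ξ i) - (A k i i * ξ i + S1 + E * S2) with hρdef
        have hρpos : 0 < ρ := by rw [hρdef]; linarith
        set Q : ℝ := |A k i i| + (∑ j ∈ Finset.univ.erase i, |A k i j|)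
          + ∑ j, tvar (ν k i j) with hQdef
        have hQ0 : 0 ≤ Q := by
          rw [hQdef]
          have h1 : (0:ℝ) ≤ ∑ j ∈ Finset.univ.erase i, |A k i j| :=
            Finset.sum_nonneg fun j _ => abs_nonneg _
          have h2 : (0:ℝ) ≤ ∑ j, tvar (ν k i j) :=
            Finset.sum_nonneg fun j _ => tvar_nonneg _
          have h3 : (0:ℝ) ≤ |A k i i| := abs_nonneg _
          linarith
        set ε' : ℝ := β * ρ / (Q + 1) with hε'def
        have hε'pos : 0 < ε' := by
          rw [hε'def]; exact div_pos (mul_pos hβpos hρpos) (by linarith)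
        set εc : ℝ := min ε' (|x T i| / 2) with hεcdef
        have hεcpos : 0 < εc := lt_min hε'pos (by linarith)
        obtain ⟨δ₂, hδ₂pos, hδ₂⟩ := Metric.continuousAt_iff.1 (hxc_at T (by linarith)) εc hεcpos
        have hcoord : ∀ u : ℝ, dist u T < δ₂ → ∀ j, |x u j - x T j| ≤ εc := by
          intro u hu j
          have h1 := dist_le_pi_dist (x u) (x T) j
          rw [Real.dist_eq] at h1
          exact h1.trans (hδ₂ hu).le
        set δ : ℝ := min δ₂ (τ (m + 1) - T) / 2 with hδdef
        have hδpos : 0 < δ := by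
          rw [hδdef]
          have h1 : 0 < min δ₂ (τ (m + 1) - T) := lt_min hδ₂pos (by linarith)
          linarith
        have hδδ₂ : δ ≤ δ₂ / 2 := by
          rw [hδdef]; have := min_le_left δ₂ (τ (m + 1) - T); linarith
        have hδb : T + δ < τ (m + 1) := by
          rw [hδdef]; have := min_le_right δ₂ (τ (m + 1) - T); linarith
        have hbxT : ∀ j, |x T j| ≤ β * ξ j := by
          intro j
          have h1 := hHb T (by linarith) le_rfl j
          rw [hβdef, show K / eT * ξ j = K * ξ j / eT by ring, le_div_iff₀ heTpos]
          exact h1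
        -- derivative bound near T
        have hderbound : ∀ s, T < s → s < T + δ → e * F i s ≤ -(α * (β * ξ i)) := by
          intro s hs1 hs2
          have hsd : dist s T < δ₂ := by
            rw [Real.dist_eq, abs_of_pos (sub_pos.2 hs1)]; linarith
          have hwin : ∀ (j : Fin n) (θ : Set.Icc (-h) (0:ℝ)),
              |x (s + (θ:ℝ)) j| ≤ E * (β * ξ j) + ε' := by
            intro j θ
            have hθ1 : -h ≤ (θ:ℝ) := θ.2.1
            have hθ2 : (θ:ℝ) ≤ 0 := θ.2.2
            rcases le_or_gt (s + (θ:ℝ)) T with huT | huT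
            · have hb := hHb (s + (θ:ℝ)) (by linarith) huT j
              have hexp : eT ≤ E * Real.exp (α * (s + (θ:ℝ))) := by
                rw [heTdef, hEdef, ← Real.exp_add]
                apply Real.exp_le_exp.2
                have h9 : α * T ≤ α * (h + (s + (θ:ℝ))) :=
                  mul_le_mul_of_nonneg_left (by linarith) hαpos.le
                linarith
              have h0 : (0:ℝ) ≤ |x (s + (θ:ℝ)) j| := abs_nonneg _
              have hcalc : |x (s + (θ:ℝ)) j| * eT ≤ E * (K * ξ j) :=
                calc |x (s + (θ:ℝ)) j| * eT
                    ≤ |x (s + (θ:ℝ)) j| * (E * Real.exp (α * (s + (θ:ℝ)))) :=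
                      mul_le_mul_of_nonneg_left hexp h0
                  _ = E * (|x (s + (θ:ℝ)) j| * Real.exp (α * (s + (θ:ℝ)))) := by ring
                  _ ≤ E * (K * ξ j) := mul_le_mul_of_nonneg_left hb (by linarith)
              have h5 : |x (s + (θ:ℝ)) j| ≤ E * (β * ξ j) := by
                rw [hβdef, show E * (K / eT * ξ j) = E * (K * ξ j) / eT by ring,
                  le_div_iff₀ heTpos]
                exact hcalc
              linarith
            · have hdu : dist (s + (θ:ℝ)) T < δ₂ := by
                rw [Real.dist_eq, abs_of_pos (sub_pos.2 huT)]
                linarith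
              have h1 := hcoord _ hdu j
              have h3 : |x (s + (θ:ℝ)) j| ≤ |x T j| + εc := by
                have h4 := abs_add_le (x T j) (x (s + (θ:ℝ)) j - x T j)
                simp only [add_sub_cancel] at h4
                linarith
              have h4 : εc ≤ ε' := min_le_left _ _
              have h8 : β * ξ j ≤ E * (β * ξ j) :=
                le_mul_of_one_le_left (mul_nonneg hβpos.le (hξ j).le) hE1
              linarith [hbxT j]
          have hcur : ∀ j, |x s j| ≤ β * ξ j + ε' := by
            intro j
            have h1 := hcoord s hsd j
            have h3 : |x s j| ≤ |x T j| + εc := by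
              have h4 := abs_add_le (x T j) (x s j - x T j)
              simp only [add_sub_cancel] at h4
              linarith
            linarith [hbxT j, min_le_left ε' (|x T i| / 2)]
          have h3 : e * x T i = β * ξ i := by rw [hyT, hxTabs]
          have hdiag : A k i i * (e * x s i) ≤ A k i i * (β * ξ i) + |A k i i| * ε' := by
            have h1 : |e * x s i - e * x T i| ≤ ε' := by
              rw [show e * x s i - e * x T i = e * (x s i - x T i) by ring,
                abs_mul, habsE, one_mul]
              exact (hcoord s hsd i).trans (min_le_left _ _)
            have h2 : A k i i * (e * x s i) - A k i i * (e * x T i) ≤ |A k i i| * ε' :=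
              calc A k i i * (e * x s i) - A k i i * (e * x T i)
                  = A k i i * (e * x s i - e * x T i) := by ring
                _ ≤ |A k i i * (e * x s i - e * x T i)| := le_abs_self _
                _ = |A k i i| * |e * x s i - e * x T i| := abs_mul _ _
                _ ≤ |A k i i| * ε' := mul_le_mul_of_nonneg_left h1 (abs_nonneg _)
            rw [← h3]
            linarith
          have hoff : ∀ j ∈ Finset.univ.erase i,
              A k i j * (e * x s j) ≤ |A k i j| * (β * ξ j + ε') := by
            intro j _
            calc A k i j * (e * x s j) ≤ |A k i j * (e * x s j)| := le_abs_self _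
              _ = |A k i j| * |x s j| := by rw [abs_mul, abs_mul, habsE, one_mul]
              _ ≤ |A k i j| * (β * ξ j + ε') :=
                  mul_le_mul_of_nonneg_left (hcur j) (abs_nonneg _)
          have hsintb : ∀ j : Fin n, |sint (ν k i j) fun θ => x (s + (θ:ℝ)) j|
              ≤ tvar (ν k i j) * (E * (β * ξ j) + ε') :=
            fun j => abs_sint_le _ (fun θ => hwin j θ)
          have hsc : (∑ j ∈ Finset.univ.erase i, e * (A k i j * x s j))
              = ∑ j ∈ Finset.univ.erase i, A k i j * (e * x s j) :=
            Finset.sum_congr rfl fun j _ => by ring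
          have hdecomp : e * F i s = A k i i * (e * x s i)
              + (∑ j ∈ Finset.univ.erase i, A k i j * (e * x s j))
              + e * ∑ j, sint (ν k i j) fun θ => x (s + (θ:ℝ)) j := by
            simp only [hFdef]
            rw [mul_add]
            congr 1
            rw [Finset.mul_sum, ← Finset.sum_erase_add Finset.univ _ (Finset.mem_univ i), hsc]
            ring
          have hsum_e : e * (∑ j, sint (ν k i j) fun θ => x (s + (θ:ℝ)) j)
              ≤ ∑ j, tvar (ν k i j) * (E * (β * ξ j) + ε') :=
            calc e * (∑ j, sint (ν k i j) fun θ => x (s + (θ:ℝ)) j)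
                ≤ |e * (∑ j, sint (ν k i j) fun θ => x (s + (θ:ℝ)) j)| := le_abs_self _
              _ = |∑ j, sint (ν k i j) fun θ => x (s + (θ:ℝ)) j| := by
                  rw [abs_mul, habsE, one_mul]
              _ ≤ ∑ j, |sint (ν k i j) fun θ => x (s + (θ:ℝ)) j| :=
                  Finset.abs_sum_le_sum_abs _ _
              _ ≤ ∑ j, tvar (ν k i j) * (E * (β * ξ j) + ε') :=
                  Finset.sum_le_sum fun j _ => hsintb j
          have hstep : e * F i s ≤ (A k i i * (β * ξ i) + |A k i i| * ε')
              + (∑ j ∈ Finset.univ.erase i, |A k i j| * (β * ξ j + ε'))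
              + ∑ j, tvar (ν k i j) * (E * (β * ξ j) + ε') := by
            rw [hdecomp]
            exact add_le_add (add_le_add hdiag (Finset.sum_le_sum hoff)) hsum_e
          have hsum1 : (∑ j ∈ Finset.univ.erase i, |A k i j| * (β * ξ j + ε'))
              = β * S1 + ε' * ∑ j ∈ Finset.univ.erase i, |A k i j| := by
            rw [hS1def, Finset.mul_sum, Finset.mul_sum, ← Finset.sum_add_distrib]
            exact Finset.sum_congr rfl fun j _ => by ring
          have hsum2 : (∑ j, tvar (ν k i j) * (E * (β * ξ j) + ε'))
              = β * E * S2 + ε' * ∑ j, tvar (ν k i j) := by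
            rw [hS2def, Finset.mul_sum, Finset.mul_sum, ← Finset.sum_add_distrib]
            exact Finset.sum_congr rfl fun j _ => by ring
          rw [hsum1, hsum2] at hstep
          have hfinal : (A k i i * (β * ξ i) + |A k i i| * ε')
              + (β * S1 + ε' * ∑ j ∈ Finset.univ.erase i, |A k i j|)
              + (β * E * S2 + ε' * ∑ j, tvar (ν k i j))
              = β * (A k i i * ξ i + S1 + E * S2) + ε' * Q := by
            rw [hQdef]; ring
          rw [hfinal] at hstep
          have hεQ : ε' * Q ≤ β * ρ := by
            rw [hε'def, div_mul_eq_mul_div, div_le_iff₀ (show (0:ℝ) < Q + 1 by linarith)]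
            have h9 := mul_le_mul_of_nonneg_left (show Q ≤ Q + 1 by linarith)
              (mul_pos hβpos hρpos).le
            linarith
          have hmain : β * (A k i i * ξ i + S1 + E * S2) + ε' * Q ≤ -(α * (β * ξ i)) := by
            have h1 : A k i i * ξ i + S1 + E * S2 = -(α * ξ i) - ρ := by rw [hρdef]; ring
            rw [h1]
            have h2 : β * (-(α * ξ i) - ρ) = -(α * (β * ξ i)) - β * ρ := by ring
            rw [h2]
            linarith
          exact le_trans hstep hmain
        -- integrate the derivative bound
        have hyle : ∀ z, T < z → z < T + δ →
            e * x z i ≤ e * x T i + (-(α * (β * ξ i))) * (z - T) := by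
          intro z hz1 hz2
          have hmainw : ∀ w, T < w → w < z →
              e * x z i ≤ e * x w i + (-(α * (β * ξ i))) * (z - w) := by
            intro w hw1 hw2
            have hsub : Set.Icc w z ⊆ Set.Ici (-h) := fun u hu => by
              have h1 := hu.1
              show -h ≤ u
              linarith
            have hcont : ContinuousOn (fun u => e * x u i) (Set.Icc w z) :=
              continuousOn_const.mul ((continuous_apply i).comp_continuousOn (hxc.mono hsub))
            have hders : ∀ u ∈ Set.Ico w z,
                HasDerivWithinAt (fun v => e * x v i) (e * F i u) (Set.Ici u) u :=
              fun u hu => (hder i u (lt_of_lt_of_le hw1 hu.1) (by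
                have := hu.2; linarith)).const_mul e
            have hB' : ∀ u ∈ Set.Ico w z, HasDerivWithinAt
                (fun v => e * x w i + (-(α * (β * ξ i))) * (v - w))
                (-(α * (β * ξ i))) (Set.Ici u) u := by
              intro u _
              have h1 : HasDerivWithinAt
                  (fun v : ℝ => e * x w i + (-(α * (β * ξ i))) * (v - w))
                  ((-(α * (β * ξ i))) * 1) (Set.Ici u) u :=
                (((hasDerivWithinAt_id u (Set.Ici u)).sub_const w).const_mul
                  (-(α * (β * ξ i)))).const_add (e * x w i)
              simpa using h1
            have hboundf : ∀ u ∈ Set.Ico w z, e * F i u ≤ -(α * (β * ξ i)) :=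
              fun u hu => hderbound u (lt_of_lt_of_le hw1 hu.1) (by
                have := hu.2; linarith)
            have hBc : ContinuousOn
                (fun v => e * x w i + (-(α * (β * ξ i))) * (v - w)) (Set.Icc w z) := by
              fun_prop
            have hfin := image_le_of_deriv_right_le_deriv_boundary
              hcont hders (by simp) hBc hB' hboundf
            have h6 := hfin (right_mem_Icc.2 hw2.le)
            simpa using h6
          have htend : Filter.Tendsto (fun w => e * x w i + (-(α * (β * ξ i))) * (z - w))
              (nhdsWithin T (Set.Ioi T)) (nhds (e * x T i + (-(α * (β * ξ i))) * (z - T))) := by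
            have h1 : ContinuousAt (fun w => e * x w i + (-(α * (β * ξ i))) * (z - w)) T :=
              (continuousAt_const.mul (hxic i T (by linarith))).add
                (continuousAt_const.mul (continuousAt_const.sub continuousAt_id))
            exact h1.tendsto.mono_left nhdsWithin_le_nhds
          have hev : ∀ᶠ w in nhdsWithin T (Set.Ioi T),
              e * x z i ≤ e * x w i + (-(α * (β * ξ i))) * (z - w) := by
            filter_upwards [Ioo_mem_nhdsGT_of_mem ⟨le_rfl, hz1⟩] with w hw
            exact hmainw w hw.1 hw.2
          exact ge_of_tendsto htend hev
        -- conclude the bound just after T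
        refine ⟨δ / 2, by linarith, fun z hz1 hz2 => ?_⟩
        have hz2' : z < T + δ := by linarith
        have hdz : dist z T < δ₂ := by
          rw [Real.dist_eq, abs_of_pos (sub_pos.2 hz1)]; linarith
        have hposz : 0 < e * x z i := by
          have h1 : |e * x z i - e * x T i| ≤ εc := by
            rw [show e * x z i - e * x T i = e * (x z i - x T i) by ring,
              abs_mul, habsE, one_mul]
            exact hcoord z hdz i
          have h2 : εc ≤ |x T i| / 2 := min_le_right _ _
          have h5 := (abs_le.1 h1).1
          have h6 : e * x T i = |x T i| := hyT
          linarith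
        have habsz : |x z i| = e * x z i := by
          rw [show |x z i| = |e * x z i| by rw [abs_mul, habsE, one_mul], abs_of_pos hposz]
        have hylez := hyle z hz1 hz2'
        rw [hyT, hxTabs] at hylez
        have hexp1 : 1 - α * (z - T) ≤ Real.exp (-(α * (z - T))) := by
          have := Real.add_one_le_exp (-(α * (z - T)))
          linarith
        have hexp2 : Real.exp (-(α * (z - T))) * Real.exp (α * z) = eT := by
          rw [heTdef, ← Real.exp_add]
          congr 1
          ring
        have hβξ : 0 ≤ β * ξ i := (mul_pos hβpos (hξ i)).le
        rw [habsz]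
        have hfact : β * ξ i + (-(α * (β * ξ i))) * (z - T)
            = β * ξ i * (1 - α * (z - T)) := by ring
        rw [hfact] at hylez
        calc e * x z i * Real.exp (α * z)
            ≤ β * ξ i * (1 - α * (z - T)) * Real.exp (α * z) :=
              mul_le_mul_of_nonneg_right hylez (Real.exp_pos _).le
          _ = (β * ξ i) * ((1 - α * (z - T)) * Real.exp (α * z)) := by ring
          _ ≤ (β * ξ i) * (Real.exp (-(α * (z - T))) * Real.exp (α * z)) :=
              mul_le_mul_of_nonneg_left
                (mul_le_mul_of_nonneg_right hexp1 (Real.exp_pos _).le) hβξ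
          _ = (β * ξ i) * eT := by rw [hexp2]
          _ = K * ξ i := by rw [hβdef]; field_simp
    obtain ⟨δ, hδpos, hδall⟩ : ∃ δ > 0, ∀ z, T < z → z ≤ T + δ → ∀ i,
        |x z i| * Real.exp (α * z) ≤ K * ξ i := by
      choose δf hδfpos hδf using hafter
      refine ⟨Finset.univ.inf' hnen δf, (Finset.lt_inf'_iff hnen).2 fun i _ => hδfpos i,
        fun z h1 h2 i => hδf i z h1 (le_trans h2 ?_)⟩
      have h3 := Finset.inf'_le δf (Finset.mem_univ i)
      linarith
    obtain ⟨b, hbB, hbδ⟩ := exists_lt_of_csInf_lt hBne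
      (show sInf B < T + δ by rw [← hTdef]; linarith)
    have hTb : T ≤ b := csInf_le hBbdd hbB
    have hTb2 : T < b := lt_of_le_of_ne hTb fun hEq => hTnB (by rw [hEq]; exact hbB)
    obtain ⟨hb0, i, hbi⟩ := hbB
    exact absurd (hδall b hTb2 hbδ.le i) (not_le.2 hbi)

  -- conclusion from key
  have final : ∀ i, |x t i| * Real.exp (α * t) ≤ K0 / ξmin * ξ i := by
    intro i
    by_contra hcon
    push_neg at hcon
    set ε := |x t i| * Real.exp (α * t) - K0 / ξmin * ξ i with hεdef
    have hεpos : 0 < ε := by rw [hεdef]; linarith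
    have hstep : (0:ℝ) < ε / (2 * ξ i) := div_pos hεpos (by nlinarith [hξ i])
    have hKlt : K0 / ξmin < K0 / ξmin + ε / (2 * ξ i) := by linarith
    have hkey := key _ hKlt t ht i
    have hsimp : (K0 / ξmin + ε / (2 * ξ i)) * ξ i = K0 / ξmin * ξ i + ε / 2 := by
      field_simp [hξminpos.ne', (hξ i).ne']
    rw [hsimp] at hkey
    linarith
  have hnorm : ‖x t‖ ≤ ξmax / ξmin * Real.exp (-α * t) * K0 := by
    have hr : 0 ≤ ξmax / ξmin * Real.exp (-α * t) * K0 :=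
      mul_nonneg (mul_nonneg (div_pos hξmaxpos hξminpos).le (Real.exp_pos _).le) hK00
    refine (pi_norm_le_iff_of_nonneg hr).2 fun i => ?_
    rw [Real.norm_eq_abs]
    have h1 := final i
    have h2 : K0 / ξmin * ξ i ≤ ξmax / ξmin * K0 := by
      rw [div_mul_eq_mul_div, div_mul_eq_mul_div]
      exact (div_le_div_iff_of_pos_right hξminpos).2 (by nlinarith [hξmaxle i, hξ i])
    have h3 : |x t i| * Real.exp (α * t) ≤ ξmax / ξmin * K0 := le_trans h1 h2
    have hE : (0:ℝ) < Real.exp (α * t) := Real.exp_pos _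
    rw [show (-α * t) = -(α * t) by ring, Real.exp_neg,
      show ξmax / ξmin * (Real.exp (α * t))⁻¹ * K0
        = (ξmax / ξmin * K0) / Real.exp (α * t) by ring, le_div_iff₀ hE]
    exact h3
  exact hnorm

end
end
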